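/- arXiv:math/0405256 — 2 statements merged into one kernel-verified Lean document; each statement's English description precedes it below -/
import Mathlib

section
/- Let a = (a₀,…,aₙ) be a tuple of integers ≥ 2 with n ≥ 2, of the form (2c₁, 2c₂, …, 2c_{m−2}, 2, a_{m−1}) where (c_k) is the Sylvester sequence and a_{m−1} satisfies 2c_{m−2} < a_{m−1} < 2c_{m−1} − 2. Then 1 < Σᵢ 1/aᵢ. -/
/- STATEMENT 12: for a tuple of the form (2c₁, 2c₂, …, 2c_{m−2}, 2, a_{m−1}), where
(c_k) is the Sylvester sequence and 2c_{m−2} < a_{m−1} < 2c_{m−1} − 2, the Fano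
condition 1 < Σᵢ 1/aᵢ holds. -/

theorem fano_condition_sylvester_tuple (c : ℕ → ℕ) (h1 : c 1 = 2)
    (hrec : ∀ k, 1 ≤ k → c (k + 1) = (∏ i ∈ Finset.Icc 1 k, c i) + 1)
    (m : ℕ) (hm : 3 ≤ m) (A : ℕ)
    (hA1 : 2 * c (m - 2) < A) (hA2 : A < 2 * c (m - 1) - 2) :
    (1 : ℚ) < (∑ i ∈ Finset.Icc 1 (m - 2), (1 : ℚ) / (2 * c i : ℚ)) +
      1 / 2 + 1 / (A : ℚ) := by
  have hc1 : ∀ k, 1 ≤ k → 1 ≤ c k := by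
    intro k hk
    rcases Nat.lt_or_ge k 2 with h | h
    · interval_cases k <;> omega
    · have hk' := hrec (k - 1) (by omega)
      rw [show k - 1 + 1 = k by omega] at hk'
      omega
  have hprod : ∀ n, 1 ≤ n → 2 ≤ ∏ i ∈ Finset.Icc 1 n, c i := by
    intro n hn
    induction n, hn using Nat.le_induction with
    | base => simp [h1]
    | succ n hn ih =>
      rw [Finset.prod_Icc_succ_top (by omega)]
      have := hc1 (n + 1) (by omega)
      nlinarith
  have key : ∀ n, 1 ≤ n → (∑ i ∈ Finset.Icc 1 n, (1 : ℚ) / (2 * c i : ℚ))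
      = 1 / 2 - 1 / (2 * ((∏ i ∈ Finset.Icc 1 n, c i : ℕ) : ℚ)) := by
    intro n hn
    induction n, hn using Nat.le_induction with
    | base => norm_num [h1]
    | succ n hn ih =>
      rw [Finset.sum_Icc_succ_top (by omega), ih, Finset.prod_Icc_succ_top (by omega),
        Nat.cast_mul]
      have hP := hprod n hn
      have hcQ : (c (n + 1) : ℚ) = ((∏ i ∈ Finset.Icc 1 n, c i : ℕ) : ℚ) + 1 := by
        exact_mod_cast congrArg (Nat.cast : ℕ → ℚ) (hrec n hn)
      have hP2 : (2 : ℚ) ≤ ((∏ i ∈ Finset.Icc 1 n, c i : ℕ) : ℚ) := by exact_mod_cast hP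
      set P : ℚ := ((∏ i ∈ Finset.Icc 1 n, c i : ℕ) : ℚ) with hPdef
      have hP0 : P ≠ 0 := by linarith
      have hP1 : P + 1 ≠ 0 := by linarith
      rw [hcQ]
      field_simp
      ring
  -- specialize to n = m - 2
  set n := m - 2 with hn
  have hn1 : 1 ≤ n := by omega
  have hm1 : m - 1 = n + 1 := by omega
  rw [key n hn1]
  have hP := hprod n hn1
  set Pn : ℕ := ∏ i ∈ Finset.Icc 1 n, c i with hPn
  have hcm : c (m - 1) = Pn + 1 := by rw [hm1]; exact hrec n hn1
  have hA2' : A < 2 * Pn := by omega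
  have hA0 : 0 < A := by
    have := hc1 n hn1; omega
  have h2P : (0 : ℚ) < 2 * (Pn : ℚ) := by positivity
  have hcast : (A : ℚ) < 2 * (Pn : ℚ) := by exact_mod_cast hA2'
  have hAQ : (0 : ℚ) < (A : ℚ) := by exact_mod_cast hA0
  have hlt : 1 / (2 * (Pn : ℚ)) < 1 / (A : ℚ) :=
    one_div_lt_one_div_of_lt hAQ hcast
  linarith
end

section
/- In formula τ = (1/N) Σ_{j=0}^{N−1} ∏ᵢ cot(π(2j+1)/(2aᵢ)) · cot(π(2j+1)/(2N)), the value is independent of the choice of common multiple N of the aᵢ's: if N and N' are both common multiples of a₁,…,a_{2k+1}, the two resulting sums are equal. -/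
/- STATEMENT 13: Zagier's cotangent formula
τ = ((−1)^k / N) Σ_{j=0}^{N−1} cot(π(2j+1)/(2N)) ∏ᵢ cot(π(2j+1)/(2aᵢ))
is independent of the choice of common multiple N of a₁,…,a_{2k+1}. -/

open Real

-- Key algebraic identity: sum of 1/(1 - z ζ^r) over m-th roots of unity
lemma zsf_sum_inv (m : ℕ) (hm : 0 < m) {ζ z : ℂ} (hζ : IsPrimitiveRoot ζ m)
    (hz : z ^ m ≠ 1) :
    ∑ r ∈ Finset.range m, (1 - z * ζ ^ r)⁻¹ = (m : ℂ) / (1 - z ^ m) := by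
  have h1 : (1 : ℂ) - z ^ m ≠ 0 := sub_ne_zero.mpr fun h => hz h.symm
  have hpow : ∀ r : ℕ, (z * ζ ^ r) ^ m = z ^ m := by
    intro r
    rw [mul_pow, ← pow_mul, mul_comm r m, pow_mul, hζ.pow_eq_one, one_pow, mul_one]
  have hne : ∀ r : ℕ, z * ζ ^ r ≠ 1 := by
    intro r h
    exact hz (by rw [← hpow r, h, one_pow])
  rw [eq_div_iff h1, Finset.sum_mul]
  have key : ∀ r ∈ Finset.range m, (1 - z * ζ ^ r)⁻¹ * (1 - z ^ m)
      = ∑ t ∈ Finset.range m, (z * ζ ^ r) ^ t := by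
    intro r _
    rw [geom_sum_eq (hne r) m, hpow r]
    have h2 : z * ζ ^ r - 1 ≠ 0 := sub_ne_zero.mpr (hne r)
    have h2' : (1 : ℂ) - z * ζ ^ r ≠ 0 := fun h => h2 (by linear_combination -h)
    field_simp
    ring
  rw [Finset.sum_congr rfl key, Finset.sum_comm]
  rw [Finset.sum_eq_single 0]
  · simp
  · intro t ht ht0
    have htlt : t < m := Finset.mem_range.mp ht
    have hζt : ζ ^ t ≠ 1 := hζ.pow_ne_one_of_pos_of_lt ht0 htlt
    have : ∑ r ∈ Finset.range m, (z * ζ ^ r) ^ t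
        = z ^ t * ∑ r ∈ Finset.range m, (ζ ^ t) ^ r := by
      rw [Finset.mul_sum]
      refine Finset.sum_congr rfl fun r _ => ?_
      rw [mul_pow, ← pow_mul, ← pow_mul, mul_comm r t]
    rw [this, geom_sum_eq hζt m, ← pow_mul, mul_comm t m, pow_mul, hζ.pow_eq_one, one_pow]
    simp
  · intro h
    exact absurd (Finset.mem_range.mpr hm) h

lemma zsf_cot_formula (w : ℂ) (hw : Complex.exp (2 * Complex.I * w) ≠ 1) :
    Complex.cot w = Complex.I -
      2 * Complex.I * (1 - Complex.exp (2 * Complex.I * w))⁻¹ := by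
  rw [Complex.cot_eq_exp_ratio]
  have h0 : 1 - Complex.exp (2 * Complex.I * w) ≠ 0 := sub_ne_zero.mpr fun h => hw h.symm
  have hI := Complex.I_ne_zero
  field_simp
  linear_combination (1 + Complex.exp (2*Complex.I*w)) * Complex.I_sq

lemma zsf_complex_cot_sum (m : ℕ) (hm : 0 < m) (θ : ℂ)
    (h : Complex.exp (2 * Complex.I * ((m : ℂ) * θ)) ≠ 1) :
    ∑ r ∈ Finset.range m, Complex.cot (θ + r * (Real.pi / m))
      = m * Complex.cot ((m : ℂ) * θ) := by
  have hm' : (m : ℂ) ≠ 0 := Nat.cast_ne_zero.mpr hm.ne'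
  set ζ : ℂ := Complex.exp (2 * Real.pi * Complex.I / m) with hζdef
  have hζ : IsPrimitiveRoot ζ m := Complex.isPrimitiveRoot_exp m hm.ne'
  set z : ℂ := Complex.exp (2 * Complex.I * θ) with hzdef
  have hzm : z ^ m = Complex.exp (2 * Complex.I * ((m:ℂ) * θ)) := by
    rw [hzdef, ← Complex.exp_nat_mul]
    ring_nf
  have hz : z ^ m ≠ 1 := by rw [hzm]; exact h
  have hexp : ∀ r : ℕ, Complex.exp (2 * Complex.I * ((θ : ℂ) + r * ((Real.pi : ℂ) / m)))
      = z * ζ ^ r := by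
    intro r
    rw [hζdef, hzdef, ← Complex.exp_nat_mul, ← Complex.exp_add]
    congr 1
    field_simp
  have hterm : ∀ r ∈ Finset.range m,
      Complex.cot (θ + r * ((Real.pi : ℂ) / m))
        = Complex.I - 2 * Complex.I * (1 - z * ζ ^ r)⁻¹ := by
    intro r _
    have hne : z * ζ ^ r ≠ 1 := by
      intro hcontra
      apply hz
      have : (z * ζ ^ r) ^ m = z ^ m := by
        rw [mul_pow, ← pow_mul, mul_comm r m, pow_mul, hζ.pow_eq_one, one_pow, mul_one]
      rw [← this, hcontra, one_pow]
    rw [zsf_cot_formula _ (by rw [hexp r]; exact hne), hexp r]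
  rw [Finset.sum_congr rfl hterm, Finset.sum_sub_distrib, Finset.sum_const,
    Finset.card_range, ← Finset.mul_sum, zsf_sum_inv m hm hζ hz,
    zsf_cot_formula _ (by rw [← hzm]; exact hz), ← hzm]
  have h1 : (1 : ℂ) - z ^ m ≠ 0 := sub_ne_zero.mpr fun hq => hz hq.symm
  field_simp
  ring

lemma zsf_real_cot_sum (m : ℕ) (hm : 0 < m) (x : ℝ) (h : Real.sin ((m:ℝ) * x) ≠ 0) :
    ∑ r ∈ Finset.range m, Real.cot (x + r * (π / m)) = m * Real.cot ((m:ℝ) * x) := by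
  have hm' : (m : ℂ) ≠ 0 := Nat.cast_ne_zero.mpr hm.ne'
  have hC : Complex.exp (2 * Complex.I * ((m:ℂ) * (x:ℂ))) ≠ 1 := by
    intro hE
    apply h
    rw [Complex.exp_eq_one_iff] at hE
    obtain ⟨n, hn⟩ := hE
    have hx : ((m:ℝ) * x : ℝ) = (n : ℝ) * π := by
      have h2 : (((m:ℝ) * x : ℝ) : ℂ) = ((n:ℝ) * π : ℝ) := by
        push_cast
        have hI2 := Complex.I_mul_I
        linear_combination (-Complex.I/2) * hn + ((m:ℂ)*(x:ℂ) - (n:ℂ)*(Real.pi:ℂ)) * hI2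
      exact_mod_cast h2
    rw [hx]
    exact Real.sin_int_mul_pi n
  have hsum := zsf_complex_cot_sum m hm (x : ℂ) hC
  apply Complex.ofReal_injective
  push_cast [Complex.ofReal_cot]
  convert hsum using 2

lemma zsf_cot_add_nat_mul_pi (x : ℝ) (n : ℕ) : Real.cot (x + n * π) = Real.cot x := by
  rw [Real.cot_eq_cos_div_sin, Real.cot_eq_cos_div_sin, Real.cos_add_nat_mul_pi,
    Real.sin_add_nat_mul_pi, mul_div_mul_left _ _ (pow_ne_zero n (neg_ne_zero.mpr one_ne_zero))]

lemma zsf_sin_ne (M j : ℕ) (hM : 0 < M) : Real.sin (π * (2 * (j:ℝ) + 1) / (2 * M)) ≠ 0 := by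
  intro h
  rw [Real.sin_eq_zero_iff] at h
  obtain ⟨n, hn⟩ := h
  have hM' : (2 * (M:ℝ)) ≠ 0 := by positivity
  have hπ := Real.pi_ne_zero
  have key : (n:ℝ) * (2 * M) = 2 * j + 1 := by
    apply mul_left_cancel₀ hπ
    rw [show π * ((n:ℝ) * (2 * M)) = (n:ℝ) * π * (2 * M) by ring, hn]
    field_simp
  have keyz : (n * (2 * M) : ℤ) = 2 * (j:ℤ) + 1 := by exact_mod_cast key
  have h2 : (2:ℤ) ∣ (2 * (j:ℤ) + 1) := keyz ▸ ⟨n * M, by ring⟩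
  omega

lemma zsf_reindex (m N : ℕ) (f : ℕ → ℝ) :
    ∑ j ∈ Finset.range (m * N), f j
      = ∑ j ∈ Finset.range N, ∑ r ∈ Finset.range m, f (j + N * r) := by
  rw [← Fin.sum_univ_eq_sum_range, ← (finProdFinEquiv (m := m) (n := N)).sum_comp
    (fun x : Fin (m * N) => f x), Fintype.sum_prod_type, Finset.sum_comm]
  have : ∑ y : Fin N, ∑ x : Fin m, f ↑(finProdFinEquiv (x, y))
      = ∑ y : Fin N, ∑ x : Fin m, f ((y : ℕ) + N * (x : ℕ)) := rfl
  rw [this, Fin.sum_univ_eq_sum_range (fun j => ∑ r : Fin m, f (j + N * r)) N]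
  refine Finset.sum_congr rfl fun j _ => ?_
  rw [Fin.sum_univ_eq_sum_range (fun r => f (j + N * r)) m]

lemma zsf_step (k : ℕ) (a : Fin (2 * k + 1) → ℕ) (ha : ∀ i, 2 ≤ a i)
    (N m : ℕ) (hN0 : 0 < N) (hm : 0 < m) (hN : ∀ i, a i ∣ N) :
    ∑ j ∈ Finset.range (m * N),
        (Real.cot (π * (2 * (j : ℝ) + 1) / (2 * ((m * N : ℕ) : ℝ))) *
          ∏ i, Real.cot (π * (2 * (j : ℝ) + 1) / (2 * (a i : ℝ))))
      = m * ∑ j ∈ Finset.range N,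
        (Real.cot (π * (2 * (j : ℝ) + 1) / (2 * (N : ℝ))) *
          ∏ i, Real.cot (π * (2 * (j : ℝ) + 1) / (2 * (a i : ℝ)))) := by
  have hmR : (m : ℝ) ≠ 0 := Nat.cast_ne_zero.mpr hm.ne'
  have hNR : (N : ℝ) ≠ 0 := Nat.cast_ne_zero.mpr hN0.ne'
  rw [zsf_reindex, Finset.mul_sum]
  refine Finset.sum_congr rfl fun j hj => ?_
  -- the product is periodic: P (j + N*r) = P j
  have hProd : ∀ r : ℕ,
      (∏ i, Real.cot (π * (2 * ((j + N * r : ℕ) : ℝ) + 1) / (2 * (a i : ℝ))))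
        = ∏ i, Real.cot (π * (2 * (j : ℝ) + 1) / (2 * (a i : ℝ))) := by
    intro r
    refine Finset.prod_congr rfl fun i _ => ?_
    have hai : (a i : ℝ) ≠ 0 := Nat.cast_ne_zero.mpr (by have := ha i; omega)
    obtain ⟨c, hc⟩ := hN i
    have harg : π * (2 * ((j + N * r : ℕ) : ℝ) + 1) / (2 * (a i : ℝ))
        = π * (2 * (j : ℝ) + 1) / (2 * (a i : ℝ)) + ((c * r : ℕ) : ℝ) * π := by
      have hcR : (N : ℝ) = (a i : ℝ) * (c : ℝ) := by exact_mod_cast congrArg Nat.cast hc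
      push_cast
      rw [hcR]
      field_simp
      ring
    rw [harg, zsf_cot_add_nat_mul_pi]
  -- the cot argument: π(2(j+Nr)+1)/(2mN) = x + r*(π/m)
  set x : ℝ := π * (2 * (j : ℝ) + 1) / (2 * ((m * N : ℕ) : ℝ)) with hxdef
  have hArg : ∀ r : ℕ, π * (2 * ((j + N * r : ℕ) : ℝ) + 1) / (2 * ((m * N : ℕ) : ℝ))
      = x + r * (π / m) := by
    intro r
    rw [hxdef]
    push_cast
    field_simp
    ring
  have hmx : (m : ℝ) * x = π * (2 * (j : ℝ) + 1) / (2 * (N : ℝ)) := by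
    rw [hxdef]
    push_cast
    field_simp
  have hsin : Real.sin ((m : ℝ) * x) ≠ 0 := by
    rw [hmx]
    exact zsf_sin_ne N j hN0
  calc ∑ r ∈ Finset.range m,
        (Real.cot (π * (2 * ((j + N * r : ℕ) : ℝ) + 1) / (2 * ((m * N : ℕ) : ℝ))) *
          ∏ i, Real.cot (π * (2 * ((j + N * r : ℕ) : ℝ) + 1) / (2 * (a i : ℝ))))
      = (∑ r ∈ Finset.range m, Real.cot (x + r * (π / m))) *
          ∏ i, Real.cot (π * (2 * (j : ℝ) + 1) / (2 * (a i : ℝ))) := by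
        rw [Finset.sum_mul]
        exact Finset.sum_congr rfl fun r _ => by rw [hArg r, hProd r]
    _ = m * (Real.cot (π * (2 * (j : ℝ) + 1) / (2 * (N : ℝ))) *
          ∏ i, Real.cot (π * (2 * (j : ℝ) + 1) / (2 * (a i : ℝ)))) := by
        rw [zsf_real_cot_sum m hm x hsin, hmx, mul_assoc]


theorem zagier_signature_formula_well_defined (k : ℕ) (a : Fin (2 * k + 1) → ℕ)
    (ha : ∀ i, 2 ≤ a i) (N N' : ℕ) (hN0 : 0 < N) (hN'0 : 0 < N')
    (hN : ∀ i, a i ∣ N) (hN' : ∀ i, a i ∣ N') :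
    ((-1 : ℝ) ^ k / (N : ℝ)) * ∑ j ∈ Finset.range N,
        (Real.cot (π * (2 * (j : ℝ) + 1) / (2 * N)) *
          ∏ i, Real.cot (π * (2 * (j : ℝ) + 1) / (2 * (a i : ℝ)))) =
      ((-1 : ℝ) ^ k / (N' : ℝ)) * ∑ j ∈ Finset.range N',
        (Real.cot (π * (2 * (j : ℝ) + 1) / (2 * N')) *
          ∏ i, Real.cot (π * (2 * (j : ℝ) + 1) / (2 * (a i : ℝ)))) := by
  have key : ∀ (M m : ℕ), 0 < M → 0 < m → (∀ i, a i ∣ M) →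
      ((-1 : ℝ) ^ k / ((m * M : ℕ) : ℝ)) * ∑ j ∈ Finset.range (m * M),
          (Real.cot (π * (2 * (j : ℝ) + 1) / (2 * ((m * M : ℕ) : ℝ))) *
            ∏ i, Real.cot (π * (2 * (j : ℝ) + 1) / (2 * (a i : ℝ))))
        = ((-1 : ℝ) ^ k / (M : ℝ)) * ∑ j ∈ Finset.range M,
          (Real.cot (π * (2 * (j : ℝ) + 1) / (2 * (M : ℝ))) *
            ∏ i, Real.cot (π * (2 * (j : ℝ) + 1) / (2 * (a i : ℝ)))) := by
    intro M m hM0 hm0 hM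
    rw [zsf_step k a ha M m hM0 hm0 hM]
    have hmR : (m : ℝ) ≠ 0 := Nat.cast_ne_zero.mpr hm0.ne'
    have hMR : (M : ℝ) ≠ 0 := Nat.cast_ne_zero.mpr hM0.ne'
    push_cast
    field_simp
  have h1 := key N N' hN0 hN'0 hN
  have h2 := key N' N hN'0 hN0 hN'
  rw [Nat.mul_comm N' N] at h1
  rw [← h1, ← h2]
end
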